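/- Let X be an (nT)×(MT) matrix, W ∈ ℝ^{nT}, y = Xβ* + W, λ > 0, and β̂ a minimizer of (1/(nT))‖Xβ − y‖² + 2λ‖β‖_{2,1}. Suppose (1/(nT))‖XᵀW‖_{2,∞} ≤ λ/2, Assumption RE(s) holds with constant κ > 0 (i.e., Δᵀ XᵀXΔ ≥ n·κ²‖Δ_J‖² for all |J| ≤ s and all Δ with ‖Δ_{J^c}‖_{2,1} ≤ 3‖Δ_J‖_{2,1}), and |J(β*)| ≤ s. Then (1/(nT))‖X(β̂ − β*)‖² ≤ 16 λ² s T / κ², and (1/√T)‖β̂ − β*‖_{2,1} ≤ 16 λ s √T / κ². -/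

import Mathlib

open scoped BigOperators Classical
open Matrix

noncomputable def blk {M T : ℕ} (β : Fin M × Fin T → ℝ) (j : Fin M) :
    EuclideanSpace ℝ (Fin T) := WithLp.toLp 2 (fun t => β (j, t))

noncomputable def norm21 {M T : ℕ} (β : Fin M × Fin T → ℝ) : ℝ := ∑ j, ‖blk β j‖

noncomputable def norm2inf {M T : ℕ} (β : Fin M × Fin T → ℝ) : ℝ :=
  ‖(fun j => ‖blk β j‖ : Fin M → ℝ)‖

set_option maxHeartbeats 1000000 in
theorem stmt_12 (n T M s : ℕ) (hn : 0 < n) (hT : 0 < T)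
    (X : Matrix (Fin (n * T)) (Fin M × Fin T) ℝ)
    (βstar βhat : Fin M × Fin T → ℝ) (W : Fin (n * T) → ℝ)
    (y : Fin (n * T) → ℝ) (hy : y = X.mulVec βstar + W)
    (lam : ℝ) (hlam : 0 < lam) (κ : ℝ) (hκ : 0 < κ)
    (hmin : ∀ β : Fin M × Fin T → ℝ,
        (1 / (n * T : ℝ)) * ∑ i, (X.mulVec βhat i - y i) ^ 2 +
          2 * lam * norm21 βhat ≤
        (1 / (n * T : ℝ)) * ∑ i, (X.mulVec β i - y i) ^ 2 + 2 * lam * norm21 β)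
    (hW : (1 / (n * T : ℝ)) * norm2inf (Xᵀ.mulVec W) ≤ lam / 2)
    (hRE : ∀ (J : Finset (Fin M)), J.card ≤ s →
        ∀ Δ : Fin M × Fin T → ℝ,
          ∑ j ∈ Jᶜ, ‖blk Δ j‖ ≤ 3 * ∑ j ∈ J, ‖blk Δ j‖ →
          (n : ℝ) * κ ^ 2 * ∑ j ∈ J, ‖blk Δ j‖ ^ 2 ≤ ∑ i, (X.mulVec Δ i) ^ 2)
    (hsparse : (Finset.univ.filter (fun j => blk βstar j ≠ 0)).card ≤ s) :
    (1 / (n * T : ℝ)) * ∑ i, (X.mulVec βhat i - X.mulVec βstar i) ^ 2 ≤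
        16 * lam ^ 2 * s * T / κ ^ 2 ∧
    (1 / Real.sqrt T) * norm21 (βhat - βstar) ≤
        16 * lam * s * Real.sqrt T / κ ^ 2 := by
  classical
  set Δ : Fin M × Fin T → ℝ := βhat - βstar with hΔdef
  set J : Finset (Fin M) := Finset.univ.filter (fun j => blk βstar j ≠ 0) with hJdef
  have hnR : (0:ℝ) < (n:ℝ) := by exact_mod_cast hn
  have hTR : (0:ℝ) < (T:ℝ) := by exact_mod_cast hT
  have hnT : (0:ℝ) < (n:ℝ) * (T:ℝ) := mul_pos hnR hTR
  set A : ℝ := ∑ i, (X.mulVec Δ i) ^ 2 with hAdef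
  have hA0 : 0 ≤ A := Finset.sum_nonneg fun i _ => sq_nonneg _
  set B : ℝ := ∑ i, (X.mulVec Δ i) * W i with hBdef
  set SJ : ℝ := ∑ j ∈ J, ‖blk Δ j‖ with hSJdef
  set SJc : ℝ := ∑ j ∈ Jᶜ, ‖blk Δ j‖ with hSJcdef
  have hSJ0 : 0 ≤ SJ := Finset.sum_nonneg fun j _ => norm_nonneg _
  have hSJc0 : 0 ≤ SJc := Finset.sum_nonneg fun j _ => norm_nonneg _
  -- pointwise residual identity
  have hmvΔ : X.mulVec Δ = X.mulVec βhat - X.mulVec βstar := by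
    rw [hΔdef, Matrix.mulVec_sub]
  have hres : ∀ i, X.mulVec βhat i - y i = X.mulVec Δ i - W i := by
    intro i
    rw [hmvΔ, hy]
    simp [Pi.sub_apply, Pi.add_apply]
    ring
  -- basic inequality from minimality
  have hbasic : (1 / ((n:ℝ) * T)) * A ≤
      (2 / ((n:ℝ) * T)) * B + 2 * lam * (norm21 βstar - norm21 βhat) := by
    have h := hmin βstar
    have hexp : ∑ i, (X.mulVec βhat i - y i) ^ 2 = A - 2 * B + ∑ i, W i ^ 2 := by
      rw [hAdef, hBdef, Finset.mul_sum, ← Finset.sum_sub_distrib, ← Finset.sum_add_distrib]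
      exact Finset.sum_congr rfl fun i _ => by rw [hres i]; ring
    have hstar : ∑ i, (X.mulVec βstar i - y i) ^ 2 = ∑ i, W i ^ 2 := by
      refine Finset.sum_congr rfl fun i _ => ?_
      rw [hy]; simp [Pi.add_apply]
    rw [hexp, hstar] at h
    have hx : (1 / ((n:ℝ) * T)) * (A - 2 * B + ∑ i, W i ^ 2) =
        (1 / ((n:ℝ) * T)) * A - (2 / ((n:ℝ) * T)) * B
          + (1 / ((n:ℝ) * T)) * ∑ i, W i ^ 2 := by ring
    rw [hx] at h
    linarith
  -- bound on B
  have hB : B ≤ norm2inf (Xᵀ.mulVec W) * norm21 Δ := by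
    set V : Fin M × Fin T → ℝ := Xᵀ.mulVec W with hVdef
    have hBeq : B = ∑ j, ∑ t, Δ (j, t) * V (j, t) := by
      rw [hBdef]
      calc ∑ i, (X.mulVec Δ i) * W i
          = ∑ i, ∑ p, (X i p * Δ p) * W i := by
            refine Finset.sum_congr rfl fun i _ => ?_
            rw [Matrix.mulVec, dotProduct, Finset.sum_mul]
        _ = ∑ p, ∑ i, (X i p * Δ p) * W i := Finset.sum_comm
        _ = ∑ p, Δ p * V p := by
            refine Finset.sum_congr rfl fun p _ => ?_
            rw [hVdef, Matrix.mulVec, dotProduct, Finset.mul_sum]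
            exact Finset.sum_congr rfl fun i _ => by rw [Matrix.transpose_apply]; ring
        _ = ∑ j, ∑ t, Δ (j, t) * V (j, t) := Fintype.sum_prod_type _
    rw [hBeq]
    have step1 : ∀ j, ∑ t, Δ (j, t) * V (j, t) ≤ ‖blk Δ j‖ * ‖blk V j‖ := by
      intro j
      have h := real_inner_le_norm (blk Δ j) (blk V j)
      simpa [blk, PiLp.inner_apply, RCLike.inner_apply, conj_trivial, mul_comm] using h
    have step2 : ∀ j, ‖blk V j‖ ≤ norm2inf V := by
      intro j
      have h := norm_le_pi_norm (fun j => ‖blk V j‖) j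
      rw [Real.norm_eq_abs, abs_of_nonneg (norm_nonneg _)] at h
      exact h
    calc ∑ j, ∑ t, Δ (j, t) * V (j, t) ≤ ∑ j, ‖blk Δ j‖ * ‖blk V j‖ :=
          Finset.sum_le_sum fun j _ => step1 j
      _ ≤ ∑ j, norm2inf V * ‖blk Δ j‖ := by
          refine Finset.sum_le_sum fun j _ => ?_
          rw [mul_comm]
          exact mul_le_mul_of_nonneg_right (step2 j) (norm_nonneg _)
      _ = norm2inf V * norm21 Δ := by rw [norm21, ← Finset.mul_sum]
  -- block decomposition of norm difference
  have hblkΔ : ∀ j, blk Δ j = blk βhat j - blk βstar j := fun j => by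
    rw [blk, blk, blk, ← WithLp.toLp_sub]; rfl
  have hzero : ∀ j ∈ Jᶜ, blk βstar j = 0 := by
    intro j hj
    have := Finset.mem_compl.mp hj
    simp only [hJdef, Finset.mem_filter, Finset.mem_univ, true_and, not_not] at this
    exact this
  have hn21Δ : norm21 Δ = SJ + SJc := by
    rw [norm21, ← Finset.sum_add_sum_compl J (fun j => ‖blk Δ j‖)]
  have hdiff : norm21 βstar - norm21 βhat ≤ SJ - SJc := by
    have h1 : norm21 βstar = ∑ j ∈ J, ‖blk βstar j‖ := by
      rw [norm21, ← Finset.sum_add_sum_compl J (fun j => ‖blk βstar j‖)]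
      have : ∑ j ∈ Jᶜ, ‖blk βstar j‖ = 0 :=
        Finset.sum_eq_zero fun j hj => by rw [hzero j hj, norm_zero]
      rw [this, add_zero]
    have h2 : norm21 βhat = ∑ j ∈ J, ‖blk βhat j‖ + SJc := by
      rw [norm21, ← Finset.sum_add_sum_compl J (fun j => ‖blk βhat j‖)]
      congr 1
      refine Finset.sum_congr rfl fun j hj => ?_
      rw [hblkΔ j, hzero j hj, sub_zero]
    rw [h1, h2]
    have h3 : ∑ j ∈ J, ‖blk βstar j‖ - ∑ j ∈ J, ‖blk βhat j‖ ≤ SJ := by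
      rw [hSJdef, ← Finset.sum_sub_distrib]
      refine Finset.sum_le_sum fun j _ => ?_
      calc ‖blk βstar j‖ - ‖blk βhat j‖ ≤ ‖blk βstar j - blk βhat j‖ :=
            norm_sub_norm_le _ _
        _ = ‖blk Δ j‖ := by rw [hblkΔ j, ← norm_neg]; congr 1; abel
    linarith
  -- main inequality
  have hBle : (2 / ((n:ℝ) * T)) * B ≤ lam * (SJ + SJc) := by
    have h1 : (1 / ((n:ℝ) * T)) * B ≤
        ((1 / ((n:ℝ) * T)) * norm2inf (Xᵀ.mulVec W)) * norm21 Δ := by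
      rw [mul_assoc]
      exact mul_le_mul_of_nonneg_left hB (by positivity)
    have h2 : ((1 / ((n:ℝ) * T)) * norm2inf (Xᵀ.mulVec W)) * norm21 Δ ≤
        (lam / 2) * norm21 Δ := by
      apply mul_le_mul_of_nonneg_right hW
      rw [hn21Δ]; linarith
    rw [hn21Δ] at h1 h2
    have hx : (2 / ((n:ℝ) * T)) * B = 2 * ((1 / ((n:ℝ) * T)) * B) := by ring
    rw [hx]
    linarith
  have hmain : (1 / ((n:ℝ) * T)) * A ≤ 3 * lam * SJ - lam * SJc := by
    have h5 := mul_le_mul_of_nonneg_left hdiff (by positivity : (0:ℝ) ≤ 2 * lam)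
    linarith [hbasic, hBle, h5]
  -- cone condition
  have hP0 : 0 ≤ (1 / ((n:ℝ) * T)) * A := by positivity
  have hcone : SJc ≤ 3 * SJ := by
    have h3 : lam * SJc ≤ lam * (3 * SJ) := by linarith [hmain, hP0]
    exact le_of_mul_le_mul_left h3 hlam
  -- RE condition
  have hre := hRE J hsparse Δ (by rw [← hSJcdef, ← hSJdef]; exact hcone)
  rw [← hAdef] at hre
  -- Cauchy-Schwarz
  have hSq0 : 0 ≤ ∑ j ∈ J, ‖blk Δ j‖ ^ 2 := Finset.sum_nonneg fun j _ => sq_nonneg _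
  have hcs : SJ ^ 2 ≤ (s:ℝ) * ∑ j ∈ J, ‖blk Δ j‖ ^ 2 := by
    have h1 : SJ ^ 2 ≤ (J.card : ℝ) * ∑ j ∈ J, ‖blk Δ j‖ ^ 2 := by
      rw [hSJdef]
      exact sq_sum_le_card_mul_sum_sq (s := J) (f := fun j => ‖blk Δ j‖)
    have h2 : (J.card : ℝ) ≤ (s:ℝ) := by exact_mod_cast hsparse
    exact h1.trans (mul_le_mul_of_nonneg_right h2 hSq0)
  -- key quadratic bounds
  set P : ℝ := (1 / ((n:ℝ) * T)) * A with hPdef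
  have hP4 : P ≤ 4 * lam * SJ := by
    linarith [hmain, mul_nonneg hlam.le hSJ0, mul_nonneg hlam.le hSJc0]
  have hSJ2 : κ ^ 2 * SJ ^ 2 ≤ (s:ℝ) * (T:ℝ) * P := by
    have hAeq : A = (n:ℝ) * (T:ℝ) * P := by rw [hPdef]; field_simp
    have e1 := mul_le_mul_of_nonneg_left hcs (by positivity : (0:ℝ) ≤ (n:ℝ) * κ ^ 2)
    have e2 := mul_le_mul_of_nonneg_left hre (Nat.cast_nonneg s : (0:ℝ) ≤ (s:ℝ))
    have h1 : (n:ℝ) * κ ^ 2 * SJ ^ 2 ≤ (s:ℝ) * A := by linarith [e1, e2]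
    rw [hAeq] at h1
    have h3 : (n:ℝ) * (κ ^ 2 * SJ ^ 2) ≤ (n:ℝ) * ((s:ℝ) * (T:ℝ) * P) := by
      linarith [h1]
    exact le_of_mul_le_mul_left h3 hnR
  have hPbound : P ≤ 16 * lam ^ 2 * (s:ℝ) * (T:ℝ) / κ ^ 2 := by
    rcases eq_or_lt_of_le hP0 with h0 | hPpos
    · rw [← h0]; positivity
    · rw [le_div_iff₀ (by positivity : (0:ℝ) < κ ^ 2)]
      have hsq : P ^ 2 ≤ 16 * lam ^ 2 * SJ ^ 2 := by
        have := mul_self_le_mul_self (by positivity : (0:ℝ) ≤ P) hP4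
        linarith [this]
      have e1 := mul_le_mul_of_nonneg_left hsq (by positivity : (0:ℝ) ≤ κ ^ 2)
      have e2 := mul_le_mul_of_nonneg_left hSJ2 (by positivity : (0:ℝ) ≤ 16 * lam ^ 2)
      have hq : κ ^ 2 * P ^ 2 ≤ 16 * lam ^ 2 * ((s:ℝ) * (T:ℝ) * P) := by
        linarith [e1, e2]
      have h3 : (P * κ ^ 2) * P ≤ (16 * lam ^ 2 * (s:ℝ) * (T:ℝ)) * P := by
        linarith [hq]
      exact le_of_mul_le_mul_right h3 hPpos
  have hSJbound : SJ ≤ 4 * lam * (s:ℝ) * (T:ℝ) / κ ^ 2 := by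
    have hκ2 : (0:ℝ) < κ ^ 2 := by positivity
    have h1 : κ ^ 2 * SJ ^ 2 ≤ (s:ℝ) * (T:ℝ) * (16 * lam ^ 2 * (s:ℝ) * (T:ℝ) / κ ^ 2) :=
      hSJ2.trans (mul_le_mul_of_nonneg_left hPbound (by positivity))
    have hR : (s:ℝ) * (T:ℝ) * (16 * lam ^ 2 * (s:ℝ) * (T:ℝ) / κ ^ 2) =
        κ ^ 2 * (4 * lam * (s:ℝ) * (T:ℝ) / κ ^ 2) ^ 2 := by
      field_simp; ring
    rw [hR] at h1
    have h2 : SJ ^ 2 ≤ (4 * lam * (s:ℝ) * (T:ℝ) / κ ^ 2) ^ 2 :=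
      le_of_mul_le_mul_left h1 hκ2
    calc SJ = Real.sqrt (SJ ^ 2) := (Real.sqrt_sq hSJ0).symm
      _ ≤ Real.sqrt ((4 * lam * (s:ℝ) * (T:ℝ) / κ ^ 2) ^ 2) := Real.sqrt_le_sqrt h2
      _ = 4 * lam * (s:ℝ) * (T:ℝ) / κ ^ 2 := Real.sqrt_sq (by positivity)
  constructor
  · -- first goal
    have hgoal : ∑ i, (X.mulVec βhat i - X.mulVec βstar i) ^ 2 = A := by
      rw [hAdef]
      refine Finset.sum_congr rfl fun i _ => ?_
      rw [hmvΔ, Pi.sub_apply]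
    rw [hgoal]
    exact hPbound
  · -- second goal
    have h21 : norm21 (βhat - βstar) ≤ 16 * lam * (s:ℝ) * (T:ℝ) / κ ^ 2 := by
      rw [← hΔdef, hn21Δ]
      have h4 : SJ + SJc ≤ 4 * SJ := by linarith [hcone]
      refine h4.trans ?_
      calc 4 * SJ ≤ 4 * (4 * lam * (s:ℝ) * (T:ℝ) / κ ^ 2) := by linarith [hSJbound]
        _ = 16 * lam * (s:ℝ) * (T:ℝ) / κ ^ 2 := by ring
    have hsT : 0 < Real.sqrt T := Real.sqrt_pos.mpr hTR
    calc (1 / Real.sqrt T) * norm21 (βhat - βstar)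
        ≤ (1 / Real.sqrt T) * (16 * lam * (s:ℝ) * (T:ℝ) / κ ^ 2) :=
          mul_le_mul_of_nonneg_left h21 (by positivity)
      _ = 16 * lam * (s:ℝ) * Real.sqrt T / κ ^ 2 := by
          rw [show ((T:ℝ)) = Real.sqrt T * Real.sqrt T from (Real.mul_self_sqrt hTR.le).symm]
          field_simp
          linear_combination (-(s:ℝ)) * (Real.sq_sqrt (by positivity : (0:ℝ) ≤ Real.sqrt T ^ 2))
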